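/- Let r ≥ 2 and L = ∂_x^r + ε^{−r} r x as above. Then the differential-operator part of L^{(r+1)/r} equals ∂_x^{r+1} + (r+1) ε^{−r} x ∂_x + ((r+1)/2) ε^{−r}. -/

import Mathlib

open Finset

/-- The generalized binomial coefficient `k(k−1)⋯(k−l+1)/l!` for `k : ℤ`. -/
def genBinom (k : ℤ) (l : ℕ) : ℚ :=
  (∏ i ∈ Finset.range l, ((k : ℚ) - (i : ℚ))) / (Nat.factorial l : ℚ)

/-- A pseudo-differential operator `Σ_{n ≤ bound} a_n ∂ₓ^n` with coefficients in `R`: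
a family of coefficients `a_n` indexed by `n : ℤ`, vanishing above some bound. -/
structure PDO (R : Type*) [CommRing R] where
  coeff : ℤ → R
  bound : ℤ
  coeff_eq_zero : ∀ n : ℤ, bound < n → coeff n = 0

variable {R : Type*} [CommRing R] [Algebra ℚ R]

/-- The coefficient of `∂ₓ^n` in the composition `A ∘ B`, determined by the generalized
Leibniz rule `∂ₓ^k ∘ f = Σ_{l ≥ 0} (k(k−1)⋯(k−l+1)/l!)(∂^l f) ∂ₓ^{k−l}` together with
bilinearity and continuity: the terms `a_k · (k…(k−l+1)/l!) ∂^l(b_j)` with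
`k − l + j = n` are parametrized by `k = n − B.bound + p` and `l ≤ p`. -/
def pdoCompCoeff (D : Derivation ℚ R R) (A B : PDO R) (n : ℤ) : R :=
  ∑ p ∈ Finset.range (A.bound + B.bound + 1 - n).toNat,
    ∑ l ∈ Finset.range (p + 1),
      A.coeff (n - B.bound + p) *
        (genBinom (n - B.bound + p) l • (⇑D)^[l] (B.coeff (B.bound - p + l)))

/-- Composition of pseudo-differential operators. -/
def pdoComp (D : Derivation ℚ R R) (A B : PDO R) : PDO R where
  coeff := pdoCompCoeff D A B
  bound := A.bound + B.bound
  coeff_eq_zero := by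
    intro n hn
    have h : (A.bound + B.bound + 1 - n).toNat = 0 := by omega
    simp [pdoCompCoeff, h]

/-- The pseudo-differential operator `∂ₓ^k`. -/
def pdoDelta (k : ℤ) : PDO R where
  coeff := fun n => if n = k then 1 else 0
  bound := k
  coeff_eq_zero := by
    intro n hn
    try dsimp only
    rw [if_neg (by omega)]

/-- The identity pseudo-differential operator `1 = ∂ₓ^0`. -/
def pdoOne : PDO R := pdoDelta 0

/-- Iterated composition power `A^n` of a pseudo-differential operator. -/
def pdoNpow (D : Derivation ℚ R R) (A : PDO R) : ℕ → PDO R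
  | 0 => pdoOne
  | n + 1 => pdoComp D A (pdoNpow D A n)

/-- The differential-operator part `A₊ = Σ_{n ≥ 0} a_n ∂ₓ^n`. -/
def pdoPlus (A : PDO R) : PDO R where
  coeff := fun n => if 0 ≤ n then A.coeff n else 0
  bound := max A.bound 0
  coeff_eq_zero := by
    intro n hn
    try dsimp only
    by_cases h : 0 ≤ n
    · rw [if_pos h]; exact A.coeff_eq_zero n (by omega)
    · rw [if_neg h]

/-- The purely negative part `A₋ = A − A₊ = Σ_{n ≤ −1} a_n ∂ₓ^n`. -/
def pdoMinus (A : PDO R) : PDO R where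
  coeff := fun n => if n < 0 then A.coeff n else 0
  bound := -1
  coeff_eq_zero := by
    intro n hn
    try dsimp only
    rw [if_neg (by omega)]


/-- The coefficient ring `ℂ[ε, ε^{−1}][x]`. -/
abbrev CoeffRing : Type := Polynomial (LaurentPolynomial ℂ)

/-- The derivation `∂ = d/dx` on `ℂ[ε, ε^{−1}][x]` (so `∂(x) = 1` and `∂(ε) = 0`). -/
noncomputable def Dx : Derivation ℚ CoeffRing CoeffRing where
  toFun := Polynomial.derivative
  map_add' := by simp
  map_smul' := by intro q p; simp
  map_one_eq_zero' := by simp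
  leibniz' := by
    intro a b
    show Polynomial.derivative (a * b) = a • Polynomial.derivative b + b • Polynomial.derivative a
    simp only [Polynomial.derivative_mul, smul_eq_mul]
    ring

section Aux
variable {R : Type*} [CommRing R] [Algebra ℚ R]

lemma genBinom_zero (k : ℤ) : genBinom k 0 = 1 := by simp [genBinom]

lemma genBinom_one (k : ℤ) : genBinom k 1 = (k : ℚ) := by simp [genBinom]

lemma genBinom_one_left {l : ℕ} (hl : 2 ≤ l) : genBinom 1 l = 0 := by
  unfold genBinom
  rw [Finset.prod_eq_zero (Finset.mem_range.2 (by omega : 1 < l))]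
  · simp
  · norm_num

lemma iter_map_zero (D : Derivation ℚ R R) (l : ℕ) : (⇑D)^[l] (0:R) = 0 := by
  induction l with
  | zero => rfl
  | succ l ih => rw [Function.iterate_succ_apply', ih, map_zero]

lemma iter_map_one (D : Derivation ℚ R R) {l : ℕ} (hl : l ≠ 0) : (⇑D)^[l] (1:R) = 0 := by
  obtain ⟨l, rfl⟩ := Nat.exists_eq_succ_of_ne_zero hl
  rw [Function.iterate_succ_apply, Derivation.map_one_eq_zero, iter_map_zero]

lemma term_zero_of_zero {D : Derivation ℚ R R} {a : R} {q : ℚ} {l : ℕ} {x : R} (h : x = 0) :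
    a * (q • (⇑D)^[l] x) = 0 := by
  rw [h, iter_map_zero, smul_zero, mul_zero]

lemma term_zero_of_one {D : Derivation ℚ R R} {a : R} {q : ℚ} {l : ℕ} {x : R} (h : x = 1)
    (hl : l ≠ 0) : a * (q • (⇑D)^[l] x) = 0 := by
  rw [h, iter_map_one D hl, smul_zero, mul_zero]

lemma pdoCompCoeff_eq_sum (D : Derivation ℚ R R) (A B : PDO R) (n : ℤ) (S : Finset (ℤ × ℕ))
    (hS : ∀ k : ℤ, ∀ l : ℕ,
      A.coeff k * (genBinom k l • (⇑D)^[l] (B.coeff (n - k + l))) ≠ 0 → (k, l) ∈ S) :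
    pdoCompCoeff D A B n =
      ∑ x ∈ S, A.coeff x.1 * (genBinom x.1 x.2 • (⇑D)^[x.2] (B.coeff (n - x.1 + x.2))) := by
  classical
  set g : ℤ × ℕ → R :=
    fun x => A.coeff x.1 * (genBinom x.1 x.2 • (⇑D)^[x.2] (B.coeff (n - x.1 + x.2))) with hg
  set N := (A.bound + B.bound + 1 - n).toNat with hN
  set T : Finset (ℤ × ℕ) :=
    (Finset.range N).biUnion
      (fun p => (Finset.range (p+1)).image (fun l => (n - B.bound + p, l))) with hT
  have hsupp : ∀ x : ℤ × ℕ, g x ≠ 0 → x ∈ T := by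
    rintro ⟨k, l⟩ hx
    have hA : A.coeff k ≠ 0 := by
      intro h; exact hx (by simp [g, h])
    have hB : B.coeff (n - k + l) ≠ 0 := by
      intro h; exact hx (term_zero_of_zero h)
    have hk : k ≤ A.bound := by
      by_contra h; exact hA (A.coeff_eq_zero _ (by omega))
    have hj : n - k + l ≤ B.bound := by
      by_contra h; exact hB (B.coeff_eq_zero _ (by omega))
    simp only [hT, Finset.mem_biUnion, Finset.mem_range, Finset.mem_image]
    refine ⟨(k - (n - B.bound)).toNat, by omega, l, by omega, ?_⟩
    have : ((k - (n - B.bound)).toNat : ℤ) = k - (n - B.bound) := Int.toNat_of_nonneg (by omega)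
    rw [this]; ring_nf
  have hTsum : pdoCompCoeff D A B n = ∑ x ∈ T, g x := by
    unfold pdoCompCoeff
    rw [hT, Finset.sum_biUnion]
    · apply Finset.sum_congr rfl
      intro p hp
      rw [Finset.sum_image (by intro a _ b _ h; simpa using h)]
      apply Finset.sum_congr rfl
      intro l hl
      simp only [g]
      have : n - (n - B.bound + (p:ℤ)) + l = B.bound - p + l := by ring
      rw [this]
    · intro a ha b hb hab
      simp only [Finset.disjoint_left, Finset.mem_image, Finset.mem_range]
      rintro ⟨k, l⟩ ⟨la, hla, hea⟩ ⟨lb, hlb, heb⟩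
      apply hab
      have h1 := congrArg Prod.fst hea
      have h2 := congrArg Prod.fst heb
      simp only at h1 h2
      omega
  rw [hTsum]
  rw [Finset.sum_subset (Finset.subset_union_left (s₂ := S))
      (by intro x _ hxT; by_contra hgx; exact hxT (hsupp x hgx)),
    ← Finset.sum_subset (Finset.subset_union_right (s₁ := T))
      (by intro x _ hxS; by_contra hgx; exact hxS (hS x.1 x.2 hgx))]

lemma pdoNpow_one_coeff (D : Derivation ℚ R R) (B : PDO R) (n : ℤ) :
    (pdoNpow D B 1).coeff n = B.coeff n := by
  show pdoCompCoeff D B pdoOne n = B.coeff n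
  rw [pdoCompCoeff_eq_sum D B pdoOne n {(n, 0)} ?_]
  · simp [genBinom_zero, pdoOne, pdoDelta]
  · intro k l h
    rcases eq_or_ne (n - k + l) 0 with hj | hj
    · rcases Nat.eq_zero_or_pos l with hl | hl
      · subst hl
        simp only [Finset.mem_singleton, Prod.mk.injEq]
        exact ⟨by omega, trivial⟩
      · exact absurd (term_zero_of_one (by simp [pdoOne, pdoDelta, hj]) (by omega)) h
    · exact absurd (term_zero_of_zero (by simp [pdoOne, pdoDelta, hj])) h

end Aux

section Aux2
variable {R : Type*} [CommRing R] [Algebra ℚ R]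

lemma powers_coeff (D : Derivation ℚ R R) (B : PDO R) (hB1 : B.coeff 1 = 1)
    (hBtop : ∀ n : ℤ, 1 < n → B.coeff n = 0) (s : ℕ)
    (hbz : ∀ k : ℤ, 1 - (s:ℤ) ≤ k → k ≤ 0 → B.coeff k = 0) :
    ∀ m : ℕ, 1 ≤ m →
    (∀ j : ℤ, (m:ℤ) < j → (pdoNpow D B m).coeff j = 0) ∧
    (pdoNpow D B m).coeff m = 1 ∧
    (∀ j : ℤ, (m:ℤ) - s ≤ j → j ≤ (m:ℤ) - 1 → (pdoNpow D B m).coeff j = 0) ∧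
    (pdoNpow D B m).coeff ((m:ℤ) - 1 - s) = (m:ℚ) • B.coeff (-(s:ℤ)) ∧
    (1 ≤ s → (pdoNpow D B m).coeff ((m:ℤ) - 2 - s) =
      (m:ℚ) • B.coeff (-(s:ℤ)-1) + ((m:ℚ) * ((m:ℚ)-1) / 2) • D (B.coeff (-(s:ℤ)))) := by
  intro m hm
  induction m, hm using Nat.le_induction with
  | base =>
    refine ⟨?_, ?_, ?_, ?_, ?_⟩
    · intro j hj
      rw [pdoNpow_one_coeff]
      exact hBtop j (by exact_mod_cast hj)
    · rw [pdoNpow_one_coeff]; exact_mod_cast hB1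
    · intro j hj1 hj2
      rw [pdoNpow_one_coeff]
      exact hbz j (by omega) (by omega)
    · rw [pdoNpow_one_coeff,
        show ((1:ℕ):ℤ) - 1 - (s:ℤ) = -(s:ℤ) from by push_cast; ring]
      norm_num
    · intro hs
      rw [pdoNpow_one_coeff,
        show ((1:ℕ):ℤ) - 2 - (s:ℤ) = -(s:ℤ) - 1 from by push_cast; ring]
      norm_num
  | succ m hm ih =>
    obtain ⟨ia, ib, ic, id_, ie⟩ := ih
    have hCm : ∀ n : ℤ, (pdoNpow D B (m+1)).coeff n = pdoCompCoeff D B (pdoNpow D B m) n :=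
      fun n => rfl
    refine ⟨?_, ?_, ?_, ?_, ?_⟩
    -- (a)
    · intro j hj
      rw [hCm, pdoCompCoeff_eq_sum D B (pdoNpow D B m) j ∅ ?_]
      · simp
      · intro k l h
        exfalso; apply h
        rcases lt_or_ge 1 k with hk | hk
        · rw [hBtop k hk, zero_mul]
        · exact term_zero_of_zero (ia _ (by omega))
    -- (b)
    · rw [hCm, pdoCompCoeff_eq_sum D B (pdoNpow D B m) _ {((1:ℤ), (0:ℕ))} ?_]
      · rw [Finset.sum_singleton]
        simp only [genBinom_zero, one_smul, Function.iterate_zero, id_eq]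
        rw [show ((m+1:ℕ):ℤ) - 1 + ((0:ℕ):ℤ) = (m:ℤ) from by push_cast; ring, ib, hB1, mul_one]
      · intro k l h
        rcases lt_or_ge 1 k with hk | hk
        · exact absurd (by rw [hBtop k hk, zero_mul]) h
        · rcases Nat.eq_zero_or_pos l with hl | hl
          · rcases eq_or_lt_of_le hk with hk1 | hk1
            · subst hl; rw [hk1]; exact Finset.mem_singleton_self _
            · exact absurd (term_zero_of_zero (ia _ (by omega))) h
          · exact absurd (term_zero_of_zero (ia _ (by omega))) h
    -- (c)
    · intro j hj1 hj2
      rw [hCm, pdoCompCoeff_eq_sum D B (pdoNpow D B m) j ∅ ?_]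
      · simp
      · intro k l h
        exfalso; apply h
        rcases lt_or_ge 1 k with hk | hk
        · rw [hBtop k hk, zero_mul]
        rcases eq_or_lt_of_le hk with hk1 | hk1
        · -- k = 1
          subst hk1
          rcases Nat.lt_or_ge l 2 with hl | hl
          · interval_cases l
            · exact term_zero_of_zero (ic _ (by omega) (by omega))
            · by_cases hjm : j = (m:ℤ)
              · refine term_zero_of_one ?_ (by omega)
                rw [show j - 1 + ((1:ℕ):ℤ) = (m:ℤ) from by omega]
                exact ib
              · exact term_zero_of_zero (ic _ (by omega) (by omega))
          · rw [genBinom_one_left hl, zero_smul, mul_zero]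
        · rcases le_or_gt k (-(s:ℤ)) with hk2 | hk2
          · exact term_zero_of_zero (ia _ (by omega))
          · rw [hbz k (by omega) (by omega), zero_mul]
    -- (d)
    · rw [hCm, pdoCompCoeff_eq_sum D B (pdoNpow D B m) _
          {((1:ℤ),(0:ℕ)), (-(s:ℤ),(0:ℕ))} ?_]
      · rw [Finset.sum_insert (by
          simp only [Finset.mem_singleton, Prod.mk.injEq]
          rintro ⟨h1, -⟩; omega), Finset.sum_singleton]
        simp only [genBinom_zero, one_smul, Function.iterate_zero, id_eq]
        rw [hB1, one_mul,
          show ((m+1:ℕ):ℤ) - 1 - (s:ℤ) - 1 + ((0:ℕ):ℤ) = (m:ℤ) - 1 - (s:ℤ) from by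
            push_cast; ring,
          show ((m+1:ℕ):ℤ) - 1 - (s:ℤ) - -(s:ℤ) + ((0:ℕ):ℤ) = (m:ℤ) from by
            push_cast; ring,
          id_, ib, mul_one]
        push_cast
        rw [add_smul, one_smul]
      · intro k l h
        rcases lt_or_ge 1 k with hk | hk
        · exact absurd (by rw [hBtop k hk, zero_mul]) h
        rcases eq_or_lt_of_le hk with hk1 | hk1
        · -- k = 1
          subst hk1
          rcases Nat.lt_or_ge l 2 with hl | hl
          · interval_cases l
            · exact Finset.mem_insert_self _ _
            · exfalso; apply h
              by_cases hs0 : s = 0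
              · refine term_zero_of_one ?_ (by omega)
                rw [show ((m+1:ℕ):ℤ) - 1 - (s:ℤ) - 1 + ((1:ℕ):ℤ) = (m:ℤ) from by omega]
                exact ib
              · exact term_zero_of_zero (ic _ (by omega) (by omega))
          · exact absurd (by rw [genBinom_one_left hl, zero_smul, mul_zero]) h
        · by_cases hke2 : k = -(s:ℤ)
          · subst hke2
            rcases Nat.eq_zero_or_pos l with hl | hl
            · subst hl
              exact Finset.mem_insert_of_mem (Finset.mem_singleton_self _)
            · exact absurd (term_zero_of_zero (ia _ (by omega))) h
          · rcases lt_or_ge k (-(s:ℤ)) with hk2 | hk2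
            · exact absurd (term_zero_of_zero (ia _ (by omega))) h
            · exact absurd (by rw [hbz k (by omega) (by omega), zero_mul]) h
    -- (e)
    · intro hs
      rw [hCm, pdoCompCoeff_eq_sum D B (pdoNpow D B m) _
          {((1:ℤ),(0:ℕ)), ((1:ℤ),(1:ℕ)), (-(s:ℤ)-1,(0:ℕ))} ?_]
      · rw [Finset.sum_insert (by
            simp only [Finset.mem_insert, Finset.mem_singleton, Prod.mk.injEq]
            rintro (⟨-, h1⟩ | ⟨h1, -⟩) <;> omega),
          Finset.sum_insert (by
            simp only [Finset.mem_singleton, Prod.mk.injEq]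
            rintro ⟨h1, -⟩; omega),
          Finset.sum_singleton]
        simp only [genBinom_zero, genBinom_one, one_smul, Function.iterate_zero,
          Function.iterate_one, id_eq, Int.cast_one]
        rw [hB1, one_mul, one_mul,
          show ((m+1:ℕ):ℤ) - 2 - (s:ℤ) - 1 + ((0:ℕ):ℤ) = (m:ℤ) - 2 - (s:ℤ) from by
            push_cast; ring,
          show ((m+1:ℕ):ℤ) - 2 - (s:ℤ) - 1 + ((1:ℕ):ℤ) = (m:ℤ) - 1 - (s:ℤ) from by
            push_cast; ring,
          show ((m+1:ℕ):ℤ) - 2 - (s:ℤ) - (-(s:ℤ)-1) + ((0:ℕ):ℤ) = (m:ℤ) from by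
            push_cast; ring,
          ie hs, id_, ib, mul_one, Derivation.map_smul]
        push_cast
        rw [show ((m:ℚ)+1)*((m:ℚ)+1-1)/2 = (m:ℚ)*((m:ℚ)-1)/2 + (m:ℚ) from by ring,
          add_smul, add_smul, one_smul]
        abel
      · intro k l h
        rcases lt_or_ge 1 k with hk | hk
        · exact absurd (by rw [hBtop k hk, zero_mul]) h
        rcases eq_or_lt_of_le hk with hk1 | hk1
        · -- k = 1
          subst hk1
          rcases Nat.lt_or_ge l 2 with hl | hl
          · interval_cases l
            · exact Finset.mem_insert_self _ _
            · exact Finset.mem_insert_of_mem (Finset.mem_insert_self _ _)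
          · exact absurd (by rw [genBinom_one_left hl, zero_smul, mul_zero]) h
        · by_cases hke : k = -(s:ℤ)-1
          · subst hke
            rcases Nat.eq_zero_or_pos l with hl | hl
            · subst hl
              exact Finset.mem_insert_of_mem
                (Finset.mem_insert_of_mem (Finset.mem_singleton_self _))
            · exact absurd (term_zero_of_zero (ia _ (by omega))) h
          · by_cases hke2 : k = -(s:ℤ)
            · subst hke2
              rcases Nat.eq_zero_or_pos l with hl | hl
              · subst hl
                exact absurd (term_zero_of_zero (ic _ (by omega) (by omega))) h
              · by_cases hl1 : l = 1
                · subst hl1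
                  refine absurd (term_zero_of_one ?_ (by omega)) h
                  rw [show ((m+1:ℕ):ℤ) - 2 - (s:ℤ) - -(s:ℤ) + ((1:ℕ):ℤ) = (m:ℤ) from by
                    push_cast; ring]
                  exact ib
                · exact absurd (term_zero_of_zero (ia _ (by omega))) h
            · rcases lt_or_ge k (-(s:ℤ)) with hk2 | hk2
              · exact absurd (term_zero_of_zero (ia _ (by omega))) h
              · exact absurd (by rw [hbz k (by omega) (by omega), zero_mul]) h
      
end Aux2

lemma qsmul_inj {R : Type*} [CommRing R] [Algebra ℚ R] {q : ℚ} (hq : q ≠ 0) {x y : R}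
    (h : q • x = q • y) : x = y := by
  have := congrArg (fun z : R => q⁻¹ • z) h
  simpa [smul_smul, inv_mul_cancel₀ hq] using this

lemma qsmul_laurent (q : ℚ) (z : LaurentPolynomial ℂ) : q • z = (q:ℂ) • z := by
  rw [show ((q:ℂ)) = algebraMap ℚ ℂ q from (eq_ratCast _ q).symm, algebraMap_smul]

lemma Dx_CX (c : LaurentPolynomial ℂ) :
    Dx (Polynomial.C c * Polynomial.X) = Polynomial.C c := by
  show Polynomial.derivative _ = _
  simp

lemma Dx_iter_CX (c : LaurentPolynomial ℂ) {l : ℕ} (hl : 2 ≤ l) :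
    (⇑Dx)^[l] (Polynomial.C c * Polynomial.X) = 0 := by
  obtain ⟨l, rfl⟩ : ∃ l', l = l' + 2 := ⟨l - 2, by omega⟩
  rw [Function.iterate_add_apply]
  have h1 : (⇑Dx)^[2] (Polynomial.C c * Polynomial.X) = 0 := by
    show Polynomial.derivative (Polynomial.derivative _) = _
    simp
  rw [h1, iter_map_zero]

set_option maxHeartbeats 1000000 in
/-- Let `r ≥ 2` and `L = ∂ₓ^r + ε^{−r} r x` over `ℂ[ε, ε^{−1}][x]`,
and let `L^{1/r} = B` be its (unique) `r`-th root of the form `∂ₓ + Σ_{n ≥ 0} bₙ ∂ₓ^{−n}`,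
so that `L^{(r+1)/r} = B^{r+1}`.  Then the differential-operator part of `L^{(r+1)/r}`
equals `∂ₓ^{r+1} + (r+1) ε^{−r} x ∂ₓ + ((r+1)/2) ε^{−r}`: its coefficient of `∂ₓ^n` for
`n ≥ 0` is `1` for `n = r+1`, `(r+1)ε^{−r}x` for `n = 1`, `((r+1)/2)ε^{−r}` for `n = 0`,
and `0` otherwise. -/
theorem plus_part_of_L_pow (r : ℕ) (hr : 2 ≤ r)
    (L : PDO CoeffRing)
    (hLr : L.coeff (r : ℤ) = 1)
    (hL0 : L.coeff 0 = Polynomial.C ((r : ℂ) • LaurentPolynomial.T (-(r : ℤ))) * Polynomial.X)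
    (hLother : ∀ n : ℤ, n ≠ (r : ℤ) → n ≠ 0 → L.coeff n = 0)
    (B : PDO CoeffRing)
    (hB1 : B.coeff 1 = 1) (hBtop : ∀ n : ℤ, 1 < n → B.coeff n = 0)
    (hBr : (pdoNpow Dx B r).coeff = L.coeff) :
    ∀ n : ℤ, 0 ≤ n →
      (pdoNpow Dx B (r + 1)).coeff n =
        if n = (r : ℤ) + 1 then 1
        else if n = 1 then
          Polynomial.C (((r : ℂ) + 1) • LaurentPolynomial.T (-(r : ℤ))) * Polynomial.X
        else if n = 0 then
          Polynomial.C ((((r : ℂ) + 1) / 2) • LaurentPolynomial.T (-(r : ℤ)))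
        else 0 := by
  have hrq : ((r:ℚ)) ≠ 0 := Nat.cast_ne_zero.mpr (by omega)
  have hCr : ∀ z : ℤ, (pdoNpow Dx B r).coeff z = L.coeff z := fun z => congrFun hBr z
  -- Stage 1: the coefficients b_0, ..., b_{r-2} vanish
  have hstage : ∀ s : ℕ, s ≤ r - 1 → ∀ k : ℤ, 1 - (s:ℤ) ≤ k → k ≤ 0 → B.coeff k = 0 := by
    intro s
    induction s with
    | zero => intro _ k h1 h2; exfalso; omega
    | succ s ihs =>
      intro hs k h1 h2
      have hbz := ihs (by omega)
      by_cases hks : k = -(s:ℤ)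
      · have hd := (powers_coeff Dx B hB1 hBtop s hbz r (by omega)).2.2.2.1
        rw [hBr, hLother _ (by omega) (by omega)] at hd
        subst hks
        exact qsmul_inj hrq (x := B.coeff (-(s:ℤ))) (y := 0) (by rw [smul_zero, ← hd])
      · exact hbz k (by omega) h2
  have hbz' : ∀ k : ℤ, 1 - ((r-1:ℕ):ℤ) ≤ k → k ≤ 0 → B.coeff k = 0 := hstage (r-1) le_rfl
  obtain ⟨Pa, Pb, Pc, Pd, Pe⟩ := powers_coeff Dx B hB1 hBtop (r-1) hbz' r (by omega)
  -- b_{r-1}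
  rw [show (r:ℤ) - 1 - ((r-1:ℕ):ℤ) = 0 from by omega, hBr, hL0] at Pd
  have hbr1 : B.coeff (-((r-1:ℕ):ℤ)) =
      Polynomial.C (LaurentPolynomial.T (-(r:ℤ))) * Polynomial.X := by
    apply qsmul_inj hrq
    rw [← Pd, ← smul_mul_assoc, Polynomial.smul_C, qsmul_laurent]
    norm_num
  -- b_r
  have he := Pe (by omega)
  rw [show (r:ℤ) - 2 - ((r-1:ℕ):ℤ) = -1 from by omega, hBr,
    hLother (-1) (by omega) (by omega), hbr1, Dx_CX] at he
  rw [eq_comm, add_eq_zero_iff_eq_neg] at he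
  have hbr : B.coeff (-((r-1:ℕ):ℤ) - 1) =
      (-(((r:ℚ)-1)/2)) • Polynomial.C (LaurentPolynomial.T (-(r:ℤ))) := by
    apply qsmul_inj hrq
    rw [he, smul_smul, ← neg_smul]
    congr 1
    ring
  -- final computation
  intro n hn
  have hni1 : ((n - (r:ℤ)), (0:ℕ)) ∉
      ({(n, (0:ℕ)), (n+1, (1:ℕ))} : Finset (ℤ × ℕ)) := by
    simp only [Finset.mem_insert, Finset.mem_singleton, Prod.mk.injEq]
    rintro (⟨h1, -⟩ | ⟨h1, -⟩) <;> omega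
  have hni2 : ((n:ℤ), (0:ℕ)) ∉ ({(n+1, (1:ℕ))} : Finset (ℤ × ℕ)) := by
    simp only [Finset.mem_singleton, Prod.mk.injEq]
    rintro ⟨h1, -⟩; omega
  have hmain : (pdoNpow Dx B (r+1)).coeff n =
      B.coeff (n - r) * L.coeff r + B.coeff n * L.coeff 0 +
        B.coeff (n+1) * (((n+1 : ℤ) : ℚ) • Dx (L.coeff 0)) := by
    have h0 : (pdoNpow Dx B (r+1)).coeff n = pdoCompCoeff Dx B (pdoNpow Dx B r) n := rfl
    rw [h0, pdoCompCoeff_eq_sum Dx B (pdoNpow Dx B r) n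
        {((n - (r:ℤ)), (0:ℕ)), (n, (0:ℕ)), (n+1, (1:ℕ))} ?_]
    · rw [Finset.sum_insert hni1, Finset.sum_insert hni2, Finset.sum_singleton]
      simp only [genBinom_zero, genBinom_one, one_smul, Function.iterate_zero,
        Function.iterate_one, id_eq]
      rw [show n - (n - (r:ℤ)) + ((0:ℕ):ℤ) = (r:ℤ) from by push_cast; ring,
        show n - n + ((0:ℕ):ℤ) = (0:ℤ) from by push_cast; ring,
        show n - (n + 1) + ((1:ℕ):ℤ) = (0:ℤ) from by push_cast; ring]
      simp only [hCr]
      ring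
    · intro k l h
      by_cases hj : n - k + l = (r:ℤ)
      · rcases Nat.eq_zero_or_pos l with hl | hl
        · subst hl
          rw [show k = n - (r:ℤ) from by omega]
          exact Finset.mem_insert_self _ _
        · refine absurd (term_zero_of_one ?_ (by omega)) h
          rw [hCr, hj]
          exact hLr
      · by_cases hj0 : n - k + l = 0
        · rcases Nat.lt_or_ge l 2 with hl | hl
          · interval_cases l
            · rw [show k = n from by omega]
              exact Finset.mem_insert_of_mem (Finset.mem_insert_self _ _)
            · rw [show k = n + 1 from by omega]
              exact Finset.mem_insert_of_mem
                (Finset.mem_insert_of_mem (Finset.mem_singleton_self _))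
          · exfalso; apply h
            rw [hCr, hj0, hL0, Dx_iter_CX _ hl, smul_zero, mul_zero]
        · exact absurd (term_zero_of_zero (by rw [hCr]; exact hLother _ hj hj0)) h
  rw [hmain]
  by_cases h1 : n = (r:ℤ) + 1
  · rw [if_pos h1, h1, hLr, mul_one,
      show (r:ℤ) + 1 - r = 1 from by ring, hB1,
      hBtop ((r:ℤ)+1) (by omega), zero_mul, add_zero,
      hBtop ((r:ℤ)+1+1) (by omega), zero_mul, add_zero]
  rw [if_neg h1]
  by_cases h2 : n = 1
  · rw [if_pos h2, h2, hLr, mul_one,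
      show (1:ℤ) - r = -((r-1:ℕ):ℤ) from by omega, hbr1, hB1, one_mul, hL0,
      hBtop ((1:ℤ)+1) (by omega), zero_mul, add_zero]
    rw [show ((r:ℂ) + 1) = (r:ℂ) + 1 from rfl, add_smul, one_smul, map_add, add_mul]
    ring
  rw [if_neg h2]
  by_cases h3 : n = 0
  · rw [if_pos h3, h3, hLr, mul_one,
      show (0:ℤ) - r = -((r-1:ℕ):ℤ) - 1 from by omega, hbr,
      hbz' 0 (by omega) (by omega), zero_mul, add_zero,
      show ((0:ℤ)+1 : ℤ) = (1:ℤ) from by norm_num, hB1, one_mul, hL0, Dx_CX]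
    norm_num
    rw [← map_neg, ← map_add]
    congr 1
    rw [qsmul_laurent, ← neg_smul, ← add_smul]
    congr 1
    push_cast
    ring
  rw [if_neg h3]
  have hn2 : 2 ≤ n := by omega
  rcases le_or_gt n (r:ℤ) with h4 | h4
  · rw [hbz' (n - r) (by omega) (by omega), zero_mul,
      hBtop n (by omega), zero_mul, hBtop (n+1) (by omega), zero_mul]
    ring
  · rw [hBtop (n - r) (by omega), zero_mul,
      hBtop n (by omega), zero_mul, hBtop (n+1) (by omega), zero_mul]
    ring
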